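/- Let X be a subset of a real normed vector space, Z a set, z_1,…,z_N ∈ Z, ℓ : X × Z → ℝ, R : X → ℝ, λ > 0, and β ≥ 0. Define L_N(x) = (1/N) Σ_{i=1}^{N} ℓ(x, z_i) + λ R(x) and, for a fixed j ∈ {1,…,N}, L_N^{\j}(x) = (1/N) Σ_{i≠j} ℓ(x, z_i) + λ R(x). Assume ℓ is β-Lipschitz in its first argument: |ℓ(x, z) − ℓ(x′, z)| ≤ β ‖x − x′‖ for all x, x′ ∈ X and z ∈ Z. Suppose x* minimizes L_N over X and x^{*\j} minimizes L_N^{\j} over X. Then L_N(x^{*\j}) − L_N(x*) ≤ (ℓ(x^{*\j}, z_j) − ℓ(x*, z_j))/N ≤ β ‖x* − x^{*\j}‖ / N. -/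

import Mathlib

/-- The loss-difference bound for regularized ERM: the gap of the full empirical loss
between the leave-one-out minimizer and the full minimizer is controlled by the
loss difference on the removed sample, which is controlled by the Lipschitz property. -/
theorem regularized_erm_loss_gap {E : Type*} [NormedAddCommGroup E]
    [NormedSpace ℝ E] {Z : Type*} (X : Set E) (N : ℕ) (hN : 1 ≤ N) (zs : Fin N → Z)
    (ℓ : E → Z → ℝ) (R : E → ℝ) (lam β : ℝ) (hlam : 0 < lam) (hβ : 0 ≤ β)
    (j : Fin N) (LN LNj : E → ℝ)
    (hLN : ∀ x, LN x = (1 / (N : ℝ)) * ∑ i, ℓ x (zs i) + lam * R x)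
    (hLNj : ∀ x, LNj x =
      (1 / (N : ℝ)) * ∑ i ∈ Finset.univ.erase j, ℓ x (zs i) + lam * R x)
    (hlip : ∀ zz : Z, ∀ x ∈ X, ∀ x' ∈ X, |ℓ x zz - ℓ x' zz| ≤ β * ‖x - x'‖)
    (xstar : E) (hxstar : xstar ∈ X) (hxstarmin : ∀ x ∈ X, LN xstar ≤ LN x)
    (xj : E) (hxj : xj ∈ X) (hxjmin : ∀ x ∈ X, LNj xj ≤ LNj x) :
    LN xj - LN xstar ≤ (ℓ xj (zs j) - ℓ xstar (zs j)) / N ∧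
      (ℓ xj (zs j) - ℓ xstar (zs j)) / N ≤ β * ‖xstar - xj‖ / N := by
  have hNpos : (0:ℝ) < N := by exact_mod_cast hN
  have hsplit : ∀ x, LN x = LNj x + ℓ x (zs j) / N := by
    intro x
    rw [hLN, hLNj]
    have : ∑ i, ℓ x (zs i)
        = ℓ x (zs j) + ∑ i ∈ Finset.univ.erase j, ℓ x (zs i) :=
      (Finset.add_sum_erase _ _ (Finset.mem_univ j)).symm
    rw [this]
    field_simp
    ring
  have h1 : LN xj - LN xstar ≤ (ℓ xj (zs j) - ℓ xstar (zs j)) / N := by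
    have hmin := hxjmin xstar hxstar
    rw [hsplit xj, hsplit xstar]
    have : (ℓ xj (zs j) - ℓ xstar (zs j)) / N
        = ℓ xj (zs j) / N - ℓ xstar (zs j) / N := by ring
    rw [this]; linarith
  refine ⟨h1, ?_⟩
  have h2 := hlip (zs j) xj hxj xstar hxstar
  have h3 : ℓ xj (zs j) - ℓ xstar (zs j) ≤ β * ‖xstar - xj‖ := by
    rw [norm_sub_rev]
    exact (le_abs_self _).trans h2
  exact div_le_div_of_nonneg_right h3 hNpos.le |>.trans_eq (by ring)
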